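/- arXiv:0802.0187 — 6 statements merged into one kernel-verified Lean document; each statement's English description precedes it below -/
import Mathlib

section
/- Let 0 < β < 1 and let a, b be real numbers with b ≥ a ≥ 0. Then (a+b)^{1+β} - a^{1+β} - b^{1+β} ≥ β · a · b^β. -/
theorem stmt_6 (β : ℝ) (hβ0 : 0 < β) (hβ1 : β < 1)
    (a b : ℝ) (ha : 0 ≤ a) (hab : a ≤ b) :
    β * a * b ^ β ≤ (a + b) ^ (1 + β) - a ^ (1 + β) - b ^ (1 + β) := by
  rcases eq_or_lt_of_le (ha.trans hab) with hb | hb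
  · subst hb
    have ha0 : a = 0 := le_antisymm hab ha
    subst ha0
    simp [Real.zero_rpow (by positivity : (1:ℝ) + β ≠ 0)]
  have hs : (0:ℝ) ≤ a / b := div_nonneg ha hb.le
  have hp : (1:ℝ) ≤ 1 + β := by linarith
  have hbern := one_add_mul_self_le_rpow_one_add (by linarith : (-1:ℝ) ≤ a / b) hp
  have hmul := mul_le_mul_of_nonneg_right hbern
    (Real.rpow_nonneg hb.le (1 + β))
  have h1 : (1 + a / b) ^ (1 + β) * b ^ (1 + β) = (a + b) ^ (1 + β) := by
    rw [← Real.mul_rpow (by linarith) hb.le]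
    field_simp
    ring_nf
  have hb2 : b ^ (1 + β) = b * b ^ β := by
    rw [Real.rpow_add hb, Real.rpow_one]
  have h2 : (1 + (1 + β) * (a / b)) * b ^ (1 + β)
      = b ^ (1 + β) + (1 + β) * a * b ^ β := by
    rw [hb2]; field_simp
  rw [h1, h2] at hmul
  have h3 : a ^ (1 + β) ≤ a * b ^ β := by
    rw [Real.rpow_add' ha (by positivity), Real.rpow_one]
    exact mul_le_mul_of_nonneg_left
      (Real.rpow_le_rpow ha hab hβ0.le) ha
  nlinarith [hmul, h3]
end

section
/- Let 0 < β < 1, let δ be a real number with β ≤ δ ≤ 1, and let a, b ≥ 0 be real numbers. Then (a+b)^{1+β} - a^{1+β} - b^{1+β} ≤ (1+β) · a^δ · b^{1+β-δ}. -/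
lemma rpow_subadd (p : ℝ) (hp : 0 ≤ p) (hp1 : p ≤ 1) (a b : ℝ) (ha : 0 ≤ a) (hb : 0 ≤ b) :
    (a + b) ^ p ≤ a ^ p + b ^ p := by
  have h := NNReal.rpow_add_le_add_rpow (a.toNNReal) (b.toNNReal) hp hp1
  have := (NNReal.coe_le_coe).2 h
  push_cast at this
  rwa [Real.coe_toNNReal a ha, Real.coe_toNNReal b hb] at this

lemma key (β : ℝ) (hβ0 : 0 < β) (hβ1 : β < 1) (a b : ℝ) (ha : 0 ≤ a) (hb : 0 ≤ b) :
    (a + b) ^ (1 + β) - a ^ (1 + β) - b ^ (1 + β) ≤ (1 + β) * a * b ^ β := by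
  set p : ℝ := 1 + β with hp
  have hp1 : (1:ℝ) ≤ p := by simp [hp]; linarith
  set g : ℝ → ℝ := fun x => p * b ^ β * x + x ^ p + b ^ p - (x + b) ^ p with hg
  have hderiv : ∀ x : ℝ, HasDerivAt g (p * b ^ β + p * x ^ (p-1) - p * (x+b) ^ (p-1)) x := by
    intro x
    have h1 : HasDerivAt (fun x : ℝ => x ^ p) (p * x ^ (p-1)) x :=
      Real.hasDerivAt_rpow_const (Or.inr hp1)
    have h2 : HasDerivAt (fun x : ℝ => (x + b) ^ p) (p * (x+b) ^ (p-1)) x := by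
      have := (Real.hasDerivAt_rpow_const (x := x + b) (p := p) (Or.inr hp1)).comp x
        ((hasDerivAt_id x).add_const b)
      simpa [Function.comp_def] using this
    have h3 : HasDerivAt (fun x : ℝ => p * b ^ β * x) (p * b ^ β) x := by
      simpa using (hasDerivAt_id x).const_mul (p * b ^ β)
    exact ((h3.add h1).add_const (b ^ p)).sub h2
  have hmono : MonotoneOn g (Set.Ici (0:ℝ)) := by
    apply monotoneOn_of_deriv_nonneg (convex_Ici 0)
    · exact fun x _ => ((hderiv x).differentiableAt).continuousAt.continuousWithinAt
    · exact fun x _ => ((hderiv x).differentiableAt).differentiableWithinAt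
    · intro x hx
      rw [(hderiv x).deriv]
      have hx0 : 0 < x := by simpa using hx
      have hsub : (x + b) ^ (p-1) ≤ x ^ (p-1) + b ^ (p-1) := by
        have : p - 1 = β := by simp [hp]
        rw [this]
        exact rpow_subadd β hβ0.le hβ1.le x b hx0.le hb
      have hbb : b ^ (p - 1) = b ^ β := by simp [hp]
      nlinarith [Real.rpow_nonneg hb β, Real.rpow_nonneg hx0.le (p-1)]
  have h0 : g 0 ≤ g a := hmono (Set.self_mem_Ici) (Set.mem_Ici.2 ha) ha
  have hg0 : g 0 = 0 := by
    simp [hg, Real.zero_rpow (by positivity : p ≠ 0)]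
  rw [hg0] at h0
  simp only [hg] at h0
  nlinarith [h0]

theorem stmt_7 (β : ℝ) (hβ0 : 0 < β) (hβ1 : β < 1)
    (δ : ℝ) (hδ1 : β ≤ δ) (hδ2 : δ ≤ 1)
    (a b : ℝ) (ha : 0 ≤ a) (hb : 0 ≤ b) :
    (a + b) ^ (1 + β) - a ^ (1 + β) - b ^ (1 + β) ≤ (1 + β) * a ^ δ * b ^ (1 + β - δ) := by
  rcases eq_or_lt_of_le ha with rfl | ha0
  · simp [Real.zero_rpow (by positivity : (1+β) ≠ 0),
      Real.zero_rpow (ne_of_gt (by linarith : (0:ℝ) < δ))]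
  rcases eq_or_lt_of_le hb with rfl | hb0
  · simp [Real.zero_rpow (by positivity : (1+β) ≠ 0),
      Real.zero_rpow (ne_of_gt (by linarith : (0:ℝ) < 1+β-δ))]
  rcases le_total a b with hab | hab
  · -- a ≤ b : use LHS ≤ (1+β) a b^β ≤ RHS
    have h1 := key β hβ0 hβ1 a b ha hb
    have h2 : a * b ^ β ≤ a ^ δ * b ^ (1 + β - δ) := by
      have e1 : a ^ δ = a * a ^ (δ - 1) := by
        nth_rewrite 1 [show δ = 1 + (δ - 1) by ring]
        rw [Real.rpow_add ha0, Real.rpow_one]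
      have e2 : b ^ (1 + β - δ) = b ^ β * b ^ (1 - δ) := by
        rw [← Real.rpow_add hb0]; ring_nf
      rw [e1, e2]
      have h3 : a ^ (1 - δ) ≤ b ^ (1 - δ) :=
        Real.rpow_le_rpow ha hab (by linarith)
      have h4 : (0:ℝ) < a ^ (1 - δ) := Real.rpow_pos_of_pos ha0 _
      have h5 : a ^ (δ - 1) = (a ^ (1 - δ))⁻¹ := by
        rw [show δ - 1 = -(1 - δ) by ring, Real.rpow_neg ha]
      have h6 : 1 ≤ a ^ (δ - 1) * b ^ (1 - δ) := by
        rw [h5, inv_mul_eq_div, le_div_iff₀ h4, one_mul]; exact h3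
      have hbp : (0:ℝ) ≤ b ^ β := Real.rpow_nonneg hb _
      calc a * b ^ β = a * b ^ β * 1 := by ring
        _ ≤ a * b ^ β * (a ^ (δ - 1) * b ^ (1 - δ)) := by
            apply mul_le_mul_of_nonneg_left h6 (by positivity)
        _ = a * a ^ (δ - 1) * (b ^ β * b ^ (1 - δ)) := by ring
    calc (a + b) ^ (1 + β) - a ^ (1 + β) - b ^ (1 + β) ≤ (1 + β) * a * b ^ β := h1
      _ = (1 + β) * (a * b ^ β) := by ring
      _ ≤ (1 + β) * (a ^ δ * b ^ (1 + β - δ)) := by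
          apply mul_le_mul_of_nonneg_left h2 (by linarith)
      _ = (1 + β) * a ^ δ * b ^ (1 + β - δ) := by ring
  · -- b ≤ a
    have h1 := key β hβ0 hβ1 b a hb ha
    rw [add_comm b a] at h1
    have h2 : a ^ β * b ≤ a ^ δ * b ^ (1 + β - δ) := by
      have e1 : a ^ δ = a ^ β * a ^ (δ - β) := by
        rw [← Real.rpow_add ha0]; ring_nf
      have e2 : b ^ (1 + β - δ) = b * b ^ (β - δ) := by
        nth_rewrite 1 [show (1 + β - δ) = 1 + (β - δ) by ring]
        rw [Real.rpow_add hb0, Real.rpow_one]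
      rw [e1, e2]
      have h3 : b ^ (δ - β) ≤ a ^ (δ - β) :=
        Real.rpow_le_rpow hb hab (by linarith)
      have h4 : (0:ℝ) < b ^ (δ - β) := Real.rpow_pos_of_pos hb0 _
      have h5 : b ^ (β - δ) = (b ^ (δ - β))⁻¹ := by
        rw [show β - δ = -(δ - β) by ring, Real.rpow_neg hb]
      have h6 : 1 ≤ a ^ (δ - β) * b ^ (β - δ) := by
        rw [h5, ← div_eq_mul_inv, le_div_iff₀ h4, one_mul]; exact h3
      calc a ^ β * b = a ^ β * b * 1 := by ring
        _ ≤ a ^ β * b * (a ^ (δ - β) * b ^ (β - δ)) := by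
            apply mul_le_mul_of_nonneg_left h6
              (mul_nonneg (Real.rpow_nonneg ha _) hb)
        _ = a ^ β * a ^ (δ - β) * (b * b ^ (β - δ)) := by ring
    calc (a + b) ^ (1 + β) - a ^ (1 + β) - b ^ (1 + β) ≤ (1 + β) * b * a ^ β := by linarith
      _ = (1 + β) * (a ^ β * b) := by ring
      _ ≤ (1 + β) * (a ^ δ * b ^ (1 + β - δ)) := by
          apply mul_le_mul_of_nonneg_left h2 (by linarith)
      _ = (1 + β) * a ^ δ * b ^ (1 + β - δ) := by ring
end

section
/- Let d ≥ 1 be an integer, 0 < α ≤ 2, 0 < β < 1 with d < α(1+β)/β, and let p : ℝ^d → [0,∞) be measurable with ∫_{ℝ^d} p(x)^{1+β} dx < ∞. For t > 0 set p_t(x) := t^{-d/α} p(t^{-1/α} x), and for l ≥ 0 define f_l(x) := ∫_0^1 p_{l+s}(x) ds. Then there is a constant C (depending only on d, α, β and ∫ p^{1+β}) such that ∫_{ℝ^d} f_l(x)^{1+β} dx ≤ C for every l ≥ 0. -/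
open MeasureTheory Set Filter
open scoped ENNReal

/-- The rescaled family `p_t(x) := t^{-d/α} p(t^{-1/α} x)` of a self-similar
transition density profile `p`. -/
noncomputable def pSelfSim (d : ℕ) (α : ℝ) (p : EuclideanSpace ℝ (Fin d) → ℝ)
    (t : ℝ) (x : EuclideanSpace ℝ (Fin d)) : ℝ :=
  t ^ (-((d : ℝ) / α)) * p ((t ^ (-(1 / α)) : ℝ) • x)

theorem stmt_10 (d : ℕ) (hd : 1 ≤ d) (α β : ℝ) (hα0 : 0 < α) (hα2 : α ≤ 2)
    (hβ0 : 0 < β) (hβ1 : β < 1) (hdim : (d : ℝ) < α * (1 + β) / β)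
    (p : EuclideanSpace ℝ (Fin d) → ℝ) (hpm : Measurable p) (hp0 : ∀ x, 0 ≤ p x)
    (hpint : ∫⁻ x, ENNReal.ofReal (p x ^ (1 + β)) < ⊤) :
    ∃ C : ℝ≥0∞, C < ⊤ ∧ ∀ l : ℝ, 0 ≤ l →
      ∫⁻ x, (∫⁻ s in Ioc (0 : ℝ) 1, ENNReal.ofReal (pSelfSim d α p (l + s) x)) ^ (1 + β) ≤ C := by
  have hβne : β ≠ 0 := hβ0.ne'
  have h1β : (0:ℝ) < 1 + β := by linarith
  have h1βne : (1:ℝ) + β ≠ 0 := h1β.ne'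
  have hαne : α ≠ 0 := hα0.ne'
  have hb1 : (0:ℝ) ≤ 1 + β := h1β.le
  set γ : ℝ := (d:ℝ)/α * (β/(1+β)) with hγdef
  have hγ0 : 0 ≤ γ := by positivity
  have hγ1 : γ < 1 := by
    have h1 : (d:ℝ)*β < α*(1+β) := (lt_div_iff₀ hβ0).mp hdim
    have h2 : γ = (d:ℝ)*β/(α*(1+β)) := by rw [hγdef]; field_simp
    rw [h2, div_lt_one (by positivity)]
    exact h1
  set I : ℝ≥0∞ := ∫⁻ x, ENNReal.ofReal (p x ^ (1 + β)) with hIdef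
  have hI : I ≠ ⊤ := hpint.ne
  -- scaling identity
  have key1 : ∀ t : ℝ, 0 < t →
      (∫⁻ x, ENNReal.ofReal (pSelfSim d α p t x) ^ (1 + β)) =
        ENNReal.ofReal (t ^ (-((d : ℝ) / α * β))) * I := by
    intro t ht
    have hc : (0:ℝ) < t ^ (-(1/α)) := Real.rpow_pos_of_pos ht _
    set c : ℝ := t ^ (-(1/α)) with hcdef
    have hgmeas : Measurable fun y : EuclideanSpace ℝ (Fin d) =>
        ENNReal.ofReal (p y ^ (1+β)) := (hpm.pow_const _).ennreal_ofReal
    have step1 : ∀ x : EuclideanSpace ℝ (Fin d),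
        ENNReal.ofReal (pSelfSim d α p t x) ^ (1 + β)
          = ENNReal.ofReal (t ^ (-((d:ℝ)/α) * (1+β))) * ENNReal.ofReal (p (c • x) ^ (1+β)) := by
      intro x
      simp only [pSelfSim, ← hcdef]
      rw [ENNReal.ofReal_rpow_of_nonneg (mul_nonneg (Real.rpow_nonneg ht.le _) (hp0 _)) hb1,
        Real.mul_rpow (Real.rpow_nonneg ht.le _) (hp0 _), ← Real.rpow_mul ht.le,
        ENNReal.ofReal_mul (Real.rpow_nonneg ht.le _)]
    have hcv : (∫⁻ x, ENNReal.ofReal (p (c • x) ^ (1+β))) =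
        ENNReal.ofReal (t ^ ((d:ℝ)/α)) * I := by
      have hm : Measurable fun y : EuclideanSpace ℝ (Fin d) => c • y := measurable_id.const_smul c
      have hmap : (∫⁻ x, ENNReal.ofReal (p (c • x) ^ (1+β))) =
          ∫⁻ y, ENNReal.ofReal (p y ^ (1+β))
            ∂(Measure.map (fun y : EuclideanSpace ℝ (Fin d) => c • y) volume) :=
        (lintegral_map hgmeas hm).symm
      rw [hmap, Measure.map_addHaar_smul volume hc.ne', lintegral_smul_measure]
      rw [hIdef]
      congr 2
      rw [finrank_euclideanSpace_fin]
      have h1 : c ^ d = t ^ (-((d:ℝ)/α)) := by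
        rw [← Real.rpow_natCast c d, hcdef, ← Real.rpow_mul ht.le]
        congr 1
        field_simp
      rw [h1, Real.rpow_neg ht.le, inv_inv, abs_of_nonneg (Real.rpow_nonneg ht.le _)]
    calc (∫⁻ x, ENNReal.ofReal (pSelfSim d α p t x) ^ (1 + β))
        = ∫⁻ x, ENNReal.ofReal (t ^ (-((d:ℝ)/α) * (1+β))) *
            ENNReal.ofReal (p (c • x) ^ (1+β)) := lintegral_congr step1
      _ = ENNReal.ofReal (t ^ (-((d:ℝ)/α) * (1+β))) *
            ∫⁻ x, ENNReal.ofReal (p (c • x) ^ (1+β)) :=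
          lintegral_const_mul' _ _ ENNReal.ofReal_ne_top
      _ = ENNReal.ofReal (t ^ (-((d:ℝ)/α) * (1+β))) * (ENNReal.ofReal (t ^ ((d:ℝ)/α)) * I) := by
          rw [hcv]
      _ = ENNReal.ofReal (t ^ (-((d:ℝ)/α*β))) * I := by
          rw [← mul_assoc, ← ENNReal.ofReal_mul (Real.rpow_nonneg ht.le _),
            ← Real.rpow_add ht]
          congr 3
          ring
  -- the dominating weight integral
  set W0 : ℝ≥0∞ := ∫⁻ s in Ioc (0:ℝ) 1, ENNReal.ofReal (s ^ (-γ)) with hW0def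
  have hW0 : W0 < ⊤ := by
    have hint : IntegrableOn (fun s : ℝ => s ^ (-γ)) (Ioc 0 1) := by
      have h := intervalIntegral.intervalIntegrable_rpow' (a := 0) (b := 1)
        (show (-1:ℝ) < -γ by linarith)
      rwa [intervalIntegrable_iff_integrableOn_Ioc_of_le (by norm_num : (0:ℝ) ≤ 1)] at h
    exact hint.lintegral_lt_top
  refine ⟨W0 * I * W0 ^ β, ?_, ?_⟩
  · exact ENNReal.mul_lt_top (ENNReal.mul_lt_top hW0 hpint)
      (ENNReal.rpow_lt_top_of_nonneg hβ0.le hW0.ne)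
  intro l hl
  set a : ℝ := γ*β/(1+β) with hadef
  set F : ℝ → EuclideanSpace ℝ (Fin d) → ℝ≥0∞ :=
    fun s x => ENNReal.ofReal (pSelfSim d α p (l + s) x) with hFdef
  set W : ℝ≥0∞ := ∫⁻ s in Ioc (0:ℝ) 1, ENNReal.ofReal ((l+s) ^ (-γ)) with hWdef
  have hW : W ≤ W0 := by
    refine lintegral_mono_ae ((ae_restrict_iff' measurableSet_Ioc).2 (ae_of_all _ fun s hs => ?_))
    exact ENNReal.ofReal_le_ofReal
      (Real.rpow_le_rpow_of_nonpos hs.1 (by linarith) (by linarith))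
  have hWne : W ≠ ⊤ := (lt_of_le_of_lt hW hW0).ne
  have hls : Measurable fun s : ℝ => l + s := measurable_const.add measurable_id
  -- measurability of F in s for fixed x, and jointly
  have hFms : ∀ x, Measurable fun s : ℝ => F s x := by
    intro x
    simp only [hFdef, pSelfSim]
    exact (((hls.pow_const _)).mul
      (hpm.comp ((hls.pow_const _).smul_const x))).ennreal_ofReal
  -- pointwise Hölder in s
  have hconj : Real.HolderConjugate (1+β) ((1+β)/β) := by
    rw [Real.holderConjugate_iff_eq_conjExponent (by linarith), add_sub_cancel_left]
  have ha1 : a * (1+β) = γ*β := by rw [hadef]; field_simp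
  have ha2 : -a * ((1+β)/β) = -γ := by rw [hadef]; field_simp
  have key2 : ∀ x : EuclideanSpace ℝ (Fin d),
      (∫⁻ s in Ioc (0:ℝ) 1, F s x) ^ (1+β) ≤
        (∫⁻ s in Ioc (0:ℝ) 1, ENNReal.ofReal ((l+s) ^ (γ*β)) * F s x ^ (1+β)) * W ^ β := by
    intro x
    set f : ℝ → ℝ≥0∞ := fun s => ENNReal.ofReal ((l+s) ^ a) * F s x with hfdef
    set g : ℝ → ℝ≥0∞ := fun s => ENNReal.ofReal ((l+s) ^ (-a)) with hgdef
    have hfm : Measurable f := ((hls.pow_const _).ennreal_ofReal).mul (hFms x)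
    have hgm : Measurable g := (hls.pow_const _).ennreal_ofReal
    have h0 : (∫⁻ s in Ioc (0:ℝ) 1, F s x) = ∫⁻ s in Ioc (0:ℝ) 1, (f * g) s := by
      refine (setLIntegral_congr_fun measurableSet_Ioc (fun s hs => ?_)).symm
      have hu : 0 < l + s := by have := hs.1; linarith
      have hone : ENNReal.ofReal ((l+s) ^ a) * ENNReal.ofReal ((l+s) ^ (-a)) = 1 := by
        rw [← ENNReal.ofReal_mul (Real.rpow_nonneg hu.le _), ← Real.rpow_add hu,
          add_neg_cancel, Real.rpow_zero, ENNReal.ofReal_one]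
      calc (f * g) s = F s x * (ENNReal.ofReal ((l+s) ^ a) * ENNReal.ofReal ((l+s) ^ (-a))) := by
            simp only [Pi.mul_apply, hfdef, hgdef]; ring
        _ = F s x := by rw [hone, mul_one]
    have hA : (∫⁻ s in Ioc (0:ℝ) 1, f s ^ (1+β)) =
        ∫⁻ s in Ioc (0:ℝ) 1, ENNReal.ofReal ((l+s) ^ (γ*β)) * F s x ^ (1+β) := by
      refine setLIntegral_congr_fun measurableSet_Ioc (fun s hs => ?_)
      have hu : 0 < l + s := by have := hs.1; linarith
      rw [hfdef]
      simp only
      rw [ENNReal.mul_rpow_of_nonneg _ _ hb1,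
        ENNReal.ofReal_rpow_of_nonneg (Real.rpow_nonneg hu.le _) hb1,
        ← Real.rpow_mul hu.le, ha1]
    have hB : (∫⁻ s in Ioc (0:ℝ) 1, g s ^ ((1+β)/β)) = W := by
      rw [hWdef]
      refine setLIntegral_congr_fun measurableSet_Ioc (fun s hs => ?_)
      have hu : 0 < l + s := by have := hs.1; linarith
      rw [hgdef]
      simp only
      rw [ENNReal.ofReal_rpow_of_nonneg (Real.rpow_nonneg hu.le _) (by positivity),
        ← Real.rpow_mul hu.le, ha2]
    have H := ENNReal.lintegral_mul_le_Lp_mul_Lq (volume.restrict (Ioc (0:ℝ) 1)) hconj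
      hfm.aemeasurable hgm.aemeasurable
    rw [hA, hB, one_div_div] at H
    rw [h0]
    have H2 := ENNReal.rpow_le_rpow H hb1
    rw [ENNReal.mul_rpow_of_nonneg _ _ hb1, ← ENNReal.rpow_mul, ← ENNReal.rpow_mul] at H2
    have e1 : 1/(1+β)*(1+β) = 1 := by field_simp
    have e2 : β/(1+β)*(1+β) = β := by field_simp
    rw [e1, e2, ENNReal.rpow_one] at H2
    exact H2
  -- joint measurability for Tonelli
  have hGm : Measurable (Function.uncurry fun (x : EuclideanSpace ℝ (Fin d)) (s : ℝ) =>
      ENNReal.ofReal ((l+s) ^ (γ*β)) * F s x ^ (1+β)) := by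
    have hlin : Measurable fun q : (EuclideanSpace ℝ (Fin d)) × ℝ => l + q.2 :=
      measurable_const.add measurable_snd
    have hsm : Measurable fun q : (EuclideanSpace ℝ (Fin d)) × ℝ =>
        ((l + q.2) ^ (-(1/α)) : ℝ) • q.1 := (hlin.pow_const _).smul measurable_fst
    simp only [Function.uncurry, hFdef, pSelfSim]
    exact ((hlin.pow_const _).ennreal_ofReal).mul
      ((((hlin.pow_const _).mul (hpm.comp hsm)).ennreal_ofReal).pow_const _)
  calc (∫⁻ x, (∫⁻ s in Ioc (0:ℝ) 1, F s x) ^ (1 + β))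
      ≤ ∫⁻ x, (∫⁻ s in Ioc (0:ℝ) 1, ENNReal.ofReal ((l+s) ^ (γ*β)) * F s x ^ (1+β)) * W ^ β :=
        lintegral_mono fun x => key2 x
    _ = (∫⁻ x, ∫⁻ s in Ioc (0:ℝ) 1, ENNReal.ofReal ((l+s) ^ (γ*β)) * F s x ^ (1+β)) * W ^ β :=
        lintegral_mul_const' _ _ (ENNReal.rpow_ne_top_of_nonneg hβ0.le hWne)
    _ = (∫⁻ s in Ioc (0:ℝ) 1, ∫⁻ x, ENNReal.ofReal ((l+s) ^ (γ*β)) * F s x ^ (1+β)) * W ^ β := by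
        rw [lintegral_lintegral_swap hGm.aemeasurable]
    _ = (∫⁻ s in Ioc (0:ℝ) 1, ENNReal.ofReal ((l+s) ^ (-γ)) * I) * W ^ β := by
        congr 1
        refine setLIntegral_congr_fun measurableSet_Ioc (fun s hs => ?_)
        have hu : 0 < l + s := by have := hs.1; linarith
        rw [lintegral_const_mul' _ _ ENNReal.ofReal_ne_top, key1 _ hu, ← mul_assoc,
          ← ENNReal.ofReal_mul (Real.rpow_nonneg hu.le _), ← Real.rpow_add hu]
        congr 3
        rw [hγdef]
        field_simp
        ring
    _ = W * I * W ^ β := by rw [lintegral_mul_const' _ _ hI, hWdef]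
    _ ≤ W0 * I * W0 ^ β :=
        mul_le_mul' (mul_le_mul' hW le_rfl) (ENNReal.rpow_le_rpow hW hβ0.le)
end

section
/- Let d ≥ 1 be an integer, 0 < α ≤ 2, 0 < β < 1 with α/β < d < α(1+β)/β (intermediate dimensions), and let p : ℝ^d → [0,∞) be measurable with ∫_{ℝ^d} p(x)^{1+β} dx < ∞. For t > 0 set p_t(x) := t^{-d/α} p(t^{-1/α} x). Then ∫_0^∞ ∫_{ℝ^d} (∫_0^1 p_{l+s}(x) ds)^{1+β} dx dl < ∞. (This is the (1+β)-integrability of the kernel defining the stable process η².) -/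
open MeasureTheory Set Filter
open scoped ENNReal

/-- Jensen's inequality (via Hölder) for probability measures on `ℝ≥0∞`-valued functions. -/
lemma jensen_prob {α : Type*} [MeasurableSpace α] (μ : Measure α) [IsProbabilityMeasure μ]
    {r : ℝ} (hr : 1 < r) {f : α → ℝ≥0∞} (hf : AEMeasurable f μ) :
    (∫⁻ a, f a ∂μ) ^ r ≤ ∫⁻ a, f a ^ r ∂μ := by
  have hr0 : 0 < r := lt_trans one_pos hr
  have h := ENNReal.lintegral_mul_le_Lp_mul_Lq μ (Real.HolderConjugate.conjExponent hr)
      hf (aemeasurable_const (b := (1 : ℝ≥0∞)))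
  simp only [Pi.mul_apply, mul_one, ENNReal.one_rpow, lintegral_const,
    measure_univ, one_mul] at h
  calc (∫⁻ a, f a ∂μ) ^ r ≤ ((∫⁻ a, f a ^ r ∂μ) ^ (1 / r)) ^ r :=
        ENNReal.rpow_le_rpow h hr0.le
    _ = ∫⁻ a, f a ^ r ∂μ := by
        rw [← ENNReal.rpow_mul, one_div, inv_mul_cancel₀ hr0.ne', ENNReal.rpow_one]

instance : IsProbabilityMeasure ((volume : Measure ℝ).restrict (Ioc (0 : ℝ) 1)) :=
  ⟨by rw [Measure.restrict_apply_univ, Real.volume_Ioc]; norm_num⟩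

/-- Scaling identity for the `(1+β)`-norm of `pSelfSim`. -/
lemma scale_lintegral (d : ℕ) {α β : ℝ} (hα0 : 0 < α) (hβ : 0 ≤ β)
    (p : EuclideanSpace ℝ (Fin d) → ℝ) (hpm : Measurable p) (hp0 : ∀ x, 0 ≤ p x)
    {t : ℝ} (ht : 0 < t) :
    ∫⁻ x, ENNReal.ofReal (pSelfSim d α p t x) ^ (1 + β)
      = ENNReal.ofReal (t ^ (-((d : ℝ) * β / α))) * ∫⁻ x, ENNReal.ofReal (p x ^ (1 + β)) := by
  have h1β : (0:ℝ) ≤ 1 + β := by linarith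
  set c : ℝ := t ^ (-(1/α)) with hc
  have hcpos : 0 < c := Real.rpow_pos_of_pos ht _
  have htd : 0 < t ^ (-((d:ℝ)/α)) := Real.rpow_pos_of_pos ht _
  have hg : Measurable fun y : EuclideanSpace ℝ (Fin d) => ENNReal.ofReal (p y ^ (1+β)) :=
    (hpm.pow_const _).ennreal_ofReal
  have key : ∀ x, ENNReal.ofReal (pSelfSim d α p t x) ^ (1+β)
      = ENNReal.ofReal ((t ^ (-((d:ℝ)/α))) ^ (1+β)) * ENNReal.ofReal (p (c • x) ^ (1+β)) := by
    intro x
    rw [pSelfSim, ENNReal.ofReal_mul htd.le, ENNReal.mul_rpow_of_nonneg _ _ h1β,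
      ENNReal.ofReal_rpow_of_nonneg htd.le h1β, ENNReal.ofReal_rpow_of_nonneg (hp0 _) h1β]
  simp_rw [key]
  have hgc : Measurable fun x : EuclideanSpace ℝ (Fin d) => ENNReal.ofReal (p (c • x) ^ (1+β)) :=
    hg.comp (measurable_const_smul c)
  rw [lintegral_const_mul _ hgc]
  have hmap : (∫⁻ x, ENNReal.ofReal (p (c • x) ^ (1+β)))
      = ENNReal.ofReal |(c ^ Module.finrank ℝ (EuclideanSpace ℝ (Fin d)))⁻¹| *
        ∫⁻ y, ENNReal.ofReal (p y ^ (1+β)) := by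
    have h1 := lintegral_map (μ := (volume : Measure (EuclideanSpace ℝ (Fin d)))) hg
      (measurable_const_smul (M := ℝ) c (α := EuclideanSpace ℝ (Fin d)))
    rw [← h1, Measure.map_addHaar_smul volume hcpos.ne', lintegral_smul_measure, smul_eq_mul]
  rw [hmap]
  have hcd : (c ^ Module.finrank ℝ (EuclideanSpace ℝ (Fin d)))⁻¹ = t ^ ((d:ℝ)/α) := by
    rw [finrank_euclideanSpace_fin, hc, ← Real.rpow_natCast (t ^ (-(1/α))) d,
      ← Real.rpow_mul ht.le, ← Real.rpow_neg ht.le]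
    congr 1
    field_simp
  rw [hcd, abs_of_pos (Real.rpow_pos_of_pos ht _), ← Real.rpow_mul ht.le, ← mul_assoc,
    ← ENNReal.ofReal_mul (Real.rpow_pos_of_pos ht _).le, ← Real.rpow_add ht]
  have : -((d:ℝ)/α) * (1 + β) + (d:ℝ)/α = -((d:ℝ) * β / α) := by ring
  rw [this]

/-- Finiteness of the model double integral. -/
lemma fin_int {q : ℝ} (hq1 : 1 < q) (hq2 : q < 2) :
    ∫⁻ l in Ioi (0:ℝ), ∫⁻ s in Ioc (0:ℝ) 1, ENNReal.ofReal ((l + s) ^ (-q)) < ⊤ := by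
  have hmeas : Measurable fun z : ℝ × ℝ => ENNReal.ofReal ((z.1 + z.2) ^ (-q)) :=
    ((measurable_fst.add measurable_snd).pow_const _).ennreal_ofReal
  rw [lintegral_lintegral_swap hmeas.aemeasurable]
  have inner : ∀ s ∈ Ioc (0:ℝ) 1, (∫⁻ l in Ioi (0:ℝ), ENNReal.ofReal ((l + s) ^ (-q)))
      = ENNReal.ofReal (s ^ (1 - q) / (q - 1)) := by
    intro s hs
    have hs0 : 0 < s := hs.1
    have step1 : (∫⁻ l in Ioi (0:ℝ), ENNReal.ofReal ((l + s) ^ (-q)))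
        = ∫⁻ u in Ioi s, ENNReal.ofReal (u ^ (-q)) := by
      have hmp := measurePreserving_add_right (volume : Measure ℝ) s
      conv_rhs => rw [← hmp.map_eq]
      have hfm : Measurable fun u : ℝ => ENNReal.ofReal (u ^ (-q)) :=
        Measurable.ennreal_ofReal (measurable_id.pow_const _)
      rw [setLIntegral_map measurableSet_Ioi hfm (measurable_add_const s)]
      congr 1
      ext l
      simp [mem_Ioi]
    rw [step1]
    have hint : IntegrableOn (fun u : ℝ => u ^ (-q)) (Ioi s) :=
      integrableOn_Ioi_rpow_of_lt (by linarith) hs0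
    have hnn : 0 ≤ᵐ[(volume : Measure ℝ).restrict (Ioi s)] fun u : ℝ => u ^ (-q) :=
      (ae_restrict_iff' measurableSet_Ioi).2 (ae_of_all _ fun u hu =>
        Real.rpow_nonneg (le_of_lt (lt_trans hs0 hu)) _)
    rw [← ofReal_integral_eq_lintegral_ofReal hint hnn, integral_Ioi_rpow_of_lt (by linarith) hs0]
    congr 1
    have e1 : -q + 1 = 1 - q := by ring
    rw [e1]
    have h1 : (1:ℝ) - q ≠ 0 := by intro h; linarith [sub_eq_zero.mp h]
    have h2 : q - 1 ≠ 0 := by intro h; linarith [sub_eq_zero.mp h]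
    field_simp
    ring
  rw [setLIntegral_congr_fun measurableSet_Ioc inner]
  have hint : IntegrableOn (fun s : ℝ => s ^ (1 - q) / (q - 1)) (Ioc (0:ℝ) 1) := by
    have h := (intervalIntegral.integrableOn_Ioo_rpow_iff (show (0:ℝ) < 2 by norm_num)).2
      (show (-1:ℝ) < 1 - q by linarith)
    exact (h.mono_set fun x hx => ⟨hx.1, lt_of_le_of_lt hx.2 one_lt_two⟩).div_const _
  have hnn : 0 ≤ᵐ[(volume : Measure ℝ).restrict (Ioc (0:ℝ) 1)]
      fun s : ℝ => s ^ (1 - q) / (q - 1) :=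
    (ae_restrict_iff' measurableSet_Ioc).2 (ae_of_all _ fun s hs =>
      div_nonneg (Real.rpow_nonneg hs.1.le _) (by linarith))
  have := hint.2
  rwa [hasFiniteIntegral_iff_ofReal hnn] at this

theorem stmt_11 (d : ℕ) (hd : 1 ≤ d) (α β : ℝ) (hα0 : 0 < α) (hα2 : α ≤ 2)
    (hβ0 : 0 < β) (hβ1 : β < 1)
    (hdim1 : α / β < (d : ℝ)) (hdim2 : (d : ℝ) < α * (1 + β) / β)
    (p : EuclideanSpace ℝ (Fin d) → ℝ) (hpm : Measurable p) (hp0 : ∀ x, 0 ≤ p x)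
    (hpint : ∫⁻ x, ENNReal.ofReal (p x ^ (1 + β)) < ⊤) :
    ∫⁻ l in Ioi (0 : ℝ),
      ∫⁻ x, (∫⁻ s in Ioc (0 : ℝ) 1, ENNReal.ofReal (pSelfSim d α p (l + s) x)) ^ (1 + β) < ⊤ := by
  set C : ℝ≥0∞ := ∫⁻ x, ENNReal.ofReal (p x ^ (1 + β)) with hC
  set q : ℝ := (d : ℝ) * β / α with hq
  have hq1 : 1 < q := by
    rw [hq, lt_div_iff₀ hα0, one_mul]
    have := (div_lt_iff₀ hβ0).mp hdim1
    linarith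
  have hq2 : q < 2 := by
    have h1 : (d : ℝ) * β < α * (1 + β) := (lt_div_iff₀ hβ0).mp hdim2
    have : q < 1 + β := by
      rw [hq, div_lt_iff₀ hα0]
      linarith [mul_comm α (1 + β)]
    linarith
  have step : ∀ l ∈ Ioi (0:ℝ),
      (∫⁻ x, (∫⁻ s in Ioc (0:ℝ) 1, ENNReal.ofReal (pSelfSim d α p (l + s) x)) ^ (1 + β))
        ≤ (∫⁻ s in Ioc (0:ℝ) 1, ENNReal.ofReal ((l + s) ^ (-q))) * C := by
    intro l hl
    have hl0 : 0 < l := hl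
    -- joint measurability
    have m1 : Measurable fun z : EuclideanSpace ℝ (Fin d) × ℝ => l + z.2 :=
      measurable_const.add measurable_snd
    have msmul : Measurable fun z : EuclideanSpace ℝ (Fin d) × ℝ =>
        ((l + z.2) ^ (-(1/α)) : ℝ) • z.1 :=
      (continuous_fst.smul continuous_snd).measurable.comp
        ((m1.pow_const _).prodMk measurable_fst)
    have mP : Measurable fun z : EuclideanSpace ℝ (Fin d) × ℝ =>
        ENNReal.ofReal (pSelfSim d α p (l + z.2) z.1) ^ (1 + β) := by
      apply Measurable.pow_const
      apply Measurable.ennreal_ofReal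
      exact (m1.pow_const _).mul (hpm.comp msmul)
    calc (∫⁻ x, (∫⁻ s in Ioc (0:ℝ) 1, ENNReal.ofReal (pSelfSim d α p (l + s) x)) ^ (1 + β))
        ≤ ∫⁻ x, ∫⁻ s in Ioc (0:ℝ) 1,
            ENNReal.ofReal (pSelfSim d α p (l + s) x) ^ (1 + β) := by
          refine lintegral_mono fun x => ?_
          refine jensen_prob _ (by linarith) ?_
          have ms : Measurable fun s : ℝ => ENNReal.ofReal (pSelfSim d α p (l + s) x) := by
            apply Measurable.ennreal_ofReal
            have hb : Measurable fun s : ℝ => l + s := measurable_const.add measurable_id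
            exact (hb.pow_const _).mul
              (hpm.comp ((hb.pow_const _).smul_const x))
          exact ms.aemeasurable
      _ = ∫⁻ s in Ioc (0:ℝ) 1, ∫⁻ x,
            ENNReal.ofReal (pSelfSim d α p (l + s) x) ^ (1 + β) :=
          lintegral_lintegral_swap mP.aemeasurable
      _ = ∫⁻ s in Ioc (0:ℝ) 1, ENNReal.ofReal ((l + s) ^ (-q)) * C := by
          refine setLIntegral_congr_fun measurableSet_Ioc (fun s hs => ?_)
          have hls : 0 < l + s := by have := hs.1; linarith
          rw [scale_lintegral d hα0 hβ0.le p hpm hp0 hls, hq, hC]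
      _ = (∫⁻ s in Ioc (0:ℝ) 1, ENNReal.ofReal ((l + s) ^ (-q))) * C :=
          lintegral_mul_const' C _ hpint.ne
  calc ∫⁻ l in Ioi (0 : ℝ),
      ∫⁻ x, (∫⁻ s in Ioc (0 : ℝ) 1, ENNReal.ofReal (pSelfSim d α p (l + s) x)) ^ (1 + β)
      ≤ ∫⁻ l in Ioi (0:ℝ), (∫⁻ s in Ioc (0:ℝ) 1, ENNReal.ofReal ((l + s) ^ (-q))) * C :=
        lintegral_mono_ae ((ae_restrict_iff' measurableSet_Ioi).2 (ae_of_all _ step))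
    _ = (∫⁻ l in Ioi (0:ℝ), ∫⁻ s in Ioc (0:ℝ) 1, ENNReal.ofReal ((l + s) ^ (-q))) * C :=
        lintegral_mul_const' C _ hpint.ne
    _ < ⊤ := ENNReal.mul_lt_top (fin_int hq1 hq2) hpint
end

section
/- Let d ≥ 1 be an integer, 0 < α ≤ 2, 0 < β < 1 with d < α(1+β)/β, and let p : ℝ^d → [0,∞) be measurable with ∫_{ℝ^d} p(x)^{1+β} dx < ∞. For t > 0 set p_t(x) := t^{-d/α} p(t^{-1/α} x). Then for every t > 0, ∫_0^t ∫_{ℝ^d} (∫_r^t p_{u-r}(x) du)^{1+β} dx dr < ∞. (This is the (1+β)-integrability of the kernel defining the stable process η¹.) -/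
open MeasureTheory Set Filter
open scoped ENNReal

private lemma measurable_rpow_const' (q : ℝ) : Measurable fun x : ℝ => x ^ q := by
  measurability

private lemma aux_rpow_lt_top {e t : ℝ} (he : -1 < e) (ht : 0 < t) :
    ∫⁻ s in Ioc (0:ℝ) t, ENNReal.ofReal (s ^ e) < ⊤ := by
  have hInt : IntegrableOn (fun s : ℝ => s ^ e) (Ioc (0:ℝ) t) := by
    have h := intervalIntegral.intervalIntegrable_rpow' (a := 0) (b := t) he
    rwa [intervalIntegrable_iff_integrableOn_Ioc_of_le ht.le] at h
  rw [← ofReal_integral_eq_lintegral_ofReal hInt ?_]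
  · exact ENNReal.ofReal_lt_top
  · filter_upwards [ae_restrict_mem measurableSet_Ioc] with s hs
    exact Real.rpow_nonneg hs.1.le _

private lemma aux_shift (f : ℝ → ℝ≥0∞) (r t : ℝ) :
    ∫⁻ u in Ioc r t, f (u - r) = ∫⁻ s in Ioc (0:ℝ) (t - r), f s := by
  have h := (measurePreserving_sub_right volume r).setLIntegral_comp_preimage_emb
    (MeasurableEquiv.subRight r).measurableEmbedding f (Ioc 0 (t - r))
  have hpre : (fun x : ℝ => x - r) ⁻¹' Ioc 0 (t - r) = Ioc r t := by
    rw [preimage_sub_const_Ioc]; simp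
  simpa [hpre] using h

private lemma aux_scale (d : ℕ) (α β : ℝ) (hα0 : 0 < α) (hβ0 : 0 < β)
    (p : EuclideanSpace ℝ (Fin d) → ℝ) (hpm : Measurable p) (hp0 : ∀ x, 0 ≤ p x)
    {s : ℝ} (hs : 0 < s) :
    ∫⁻ x, ENNReal.ofReal (pSelfSim d α p s x) ^ (1 + β)
      = ENNReal.ofReal (s ^ (-(↑d * β / α))) * ∫⁻ x, ENNReal.ofReal (p x ^ (1 + β)) := by
  have hq0 : (0:ℝ) ≤ 1 + β := by linarith
  set c : ℝ := s ^ (-(1 / α)) with hc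
  have hcpos : 0 < c := Real.rpow_pos_of_pos hs _
  have hg : Measurable fun y : EuclideanSpace ℝ (Fin d) => ENNReal.ofReal (p y ^ (1 + β)) := by
    measurability
  have step1 : ∀ x : EuclideanSpace ℝ (Fin d),
      ENNReal.ofReal (pSelfSim d α p s x) ^ (1 + β)
        = ENNReal.ofReal (s ^ (-(↑d / α) * (1 + β))) * ENNReal.ofReal (p (c • x) ^ (1 + β)) := by
    intro x
    rw [pSelfSim, ENNReal.ofReal_mul (Real.rpow_nonneg hs.le _),
      ENNReal.mul_rpow_of_nonneg _ _ hq0,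
      ENNReal.ofReal_rpow_of_nonneg (Real.rpow_nonneg hs.le _) hq0,
      ENNReal.ofReal_rpow_of_nonneg (hp0 _) hq0, ← Real.rpow_mul hs.le, ← hc]
  simp only [step1]
  have hm2 : Measurable fun x : EuclideanSpace ℝ (Fin d) =>
      ENNReal.ofReal (p (c • x) ^ (1 + β)) := hg.comp (measurable_const_smul c)
  rw [lintegral_const_mul _ hm2]
  have hmap := MeasureTheory.Measure.map_addHaar_smul
    (volume : Measure (EuclideanSpace ℝ (Fin d))) (ne_of_gt hcpos)
  have hcv : ∫⁻ x, ENNReal.ofReal (p (c • x) ^ (1 + β))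
      = ENNReal.ofReal ((c ^ Module.finrank ℝ (EuclideanSpace ℝ (Fin d)))⁻¹)
          * ∫⁻ y, ENNReal.ofReal (p y ^ (1 + β)) := by
    rw [← lintegral_map hg (measurable_const_smul c), hmap, lintegral_smul_measure]
    congr 1
    rw [abs_of_nonneg (by positivity)]
  rw [hcv, ← mul_assoc]
  congr 1
  rw [finrank_euclideanSpace_fin, ← ENNReal.ofReal_mul (Real.rpow_nonneg hs.le _)]
  congr 1
  rw [← Real.rpow_natCast c d, ← Real.rpow_neg hcpos.le, hc, ← Real.rpow_mul hs.le,
    ← Real.rpow_add hs]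
  congr 1
  field_simp
  ring

private lemma aux_meas (d : ℕ) (α : ℝ) (p : EuclideanSpace ℝ (Fin d) → ℝ)
    (hpm : Measurable p) :
    Measurable fun z : ℝ × EuclideanSpace ℝ (Fin d) =>
      ENNReal.ofReal (pSelfSim d α p z.1 z.2) := by
  unfold pSelfSim
  have h1 : Measurable fun z : ℝ × EuclideanSpace ℝ (Fin d) => z.1 ^ (-((d:ℝ)/α)) :=
    (measurable_rpow_const' _).comp measurable_fst
  have h2 : Measurable fun z : ℝ × EuclideanSpace ℝ (Fin d) => (z.1 ^ (-(1/α)) : ℝ) • z.2 :=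
    ((measurable_rpow_const' _).comp measurable_fst).smul measurable_snd
  exact (h1.mul (hpm.comp h2)).ennreal_ofReal

theorem stmt_12 (d : ℕ) (hd : 1 ≤ d) (α β : ℝ) (hα0 : 0 < α) (hα2 : α ≤ 2)
    (hβ0 : 0 < β) (hβ1 : β < 1) (hdim : (d : ℝ) < α * (1 + β) / β)
    (p : EuclideanSpace ℝ (Fin d) → ℝ) (hpm : Measurable p) (hp0 : ∀ x, 0 ≤ p x)
    (hpint : ∫⁻ x, ENNReal.ofReal (p x ^ (1 + β)) < ⊤)
    (t : ℝ) (ht : 0 < t) :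
    ∫⁻ r in Ioc (0 : ℝ) t,
      ∫⁻ x, (∫⁻ u in Ioc r t, ENNReal.ofReal (pSelfSim d α p (u - r) x)) ^ (1 + β) < ⊤ := by
  have hq0 : (0:ℝ) ≤ 1 + β := by linarith
  have hq1 : (0:ℝ) < 1 + β := by linarith
  set γ : ℝ := (d:ℝ) * β / α with hγdef
  have hγ : γ < 1 + β := by
    rw [hγdef, div_lt_iff₀ hα0]
    have h1 : (d:ℝ) * β < α * (1 + β) := by
      have := (lt_div_iff₀ hβ0).mp hdim
      linarith
    nlinarith
  set a : ℝ := (1 - β - γ) / (2 * (1 + β)) with hadef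
  set e1 : ℝ := a * ((1 + β) / β) with he1def
  set e2 : ℝ := -(a * (1 + β)) + -γ with he2def
  have he1eq : e1 = (1 - β - γ) / (2 * β) := by
    rw [he1def, hadef]; field_simp
  have he2eq : e2 = (β - 1 - γ) / 2 := by
    rw [he2def, hadef]; field_simp; ring
  have he1 : -1 < e1 := by
    rw [he1eq, lt_div_iff₀ (by positivity)]; nlinarith
  have he2 : -1 < e2 := by
    rw [he2eq, lt_div_iff₀ (by norm_num : (0:ℝ) < 2)]; linarith
  have hconj : ((1 + β) / β).HolderConjugate (1 + β) := by
    rw [Real.holderConjugate_iff]; constructor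
    · rw [lt_div_iff₀ hβ0]; linarith
    · field_simp; ring
  -- basic measurability
  have hK : Measurable fun z : ℝ × EuclideanSpace ℝ (Fin d) => ENNReal.ofReal (pSelfSim d α p z.1 z.2) :=
    aux_meas d α p hpm
  set I : ℝ≥0∞ := ∫⁻ x, ENNReal.ofReal (p x ^ (1 + β)) with hIdef
  set A0 : ℝ≥0∞ := ∫⁻ s in Ioc (0:ℝ) t, ENNReal.ofReal (s ^ e1) with hA0def
  set B0 : ℝ≥0∞ := ∫⁻ s in Ioc (0:ℝ) t, ENNReal.ofReal (s ^ e2) with hB0def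
  have hA0 : A0 < ⊤ := aux_rpow_lt_top he1 ht
  have hB0 : B0 < ⊤ := aux_rpow_lt_top he2 ht
  set K : ℝ≥0∞ := A0 ^ β * (B0 * I) with hKdef
  have hKlt : K < ⊤ :=
    ENNReal.mul_lt_top (ENNReal.rpow_lt_top_of_nonneg hβ0.le hA0.ne)
      (ENNReal.mul_lt_top hB0 hpint)
  -- the per-r bound
  have hbound : ∀ r : ℝ, 0 < r →
      ∫⁻ x, (∫⁻ u in Ioc r t, ENNReal.ofReal (pSelfSim d α p (u - r) x)) ^ (1 + β) ≤ K := by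
    intro r hr
    set W : ℝ → ℝ≥0∞ := fun u => ENNReal.ofReal ((u - r) ^ a) with hWdef
    set Gf : ℝ → EuclideanSpace ℝ (Fin d) → ℝ≥0∞ := fun u x =>
      ENNReal.ofReal ((u - r) ^ (-a)) * ENNReal.ofReal (pSelfSim d α p (u - r) x) with hGdef
    have hWm : Measurable W :=
      ((measurable_rpow_const' a).comp (measurable_id.sub_const r)).ennreal_ofReal
    have hGxm : ∀ x : EuclideanSpace ℝ (Fin d), Measurable fun u => Gf u x := by
      intro x
      refine Measurable.mul (f := fun u => ENNReal.ofReal ((u - r) ^ (-a)))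
        (g := fun u => ENNReal.ofReal (pSelfSim d α p (u - r) x)) ?_ ?_
      · exact ((measurable_rpow_const' _).comp (measurable_id.sub_const r)).ennreal_ofReal
      · exact hK.comp ((measurable_id.sub_const r).prodMk measurable_const)
    -- A(r) bound
    have hAr : (∫⁻ u in Ioc r t, W u ^ ((1 + β) / β)) ≤ A0 := by
      have hcongr : ∫⁻ u in Ioc r t, W u ^ ((1 + β) / β)
          = ∫⁻ u in Ioc r t, ENNReal.ofReal ((u - r) ^ e1) := by
        refine setLIntegral_congr_fun measurableSet_Ioc (fun u hu => ?_)
        have hur : (0:ℝ) < u - r := by simp only [Set.mem_Ioc] at hu; linarith [hu.1]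
        rw [hWdef]
        rw [ENNReal.ofReal_rpow_of_nonneg (Real.rpow_nonneg hur.le _)
              (by positivity : (0:ℝ) ≤ (1 + β)/β), ← Real.rpow_mul hur.le, ← he1def]
      rw [hcongr, aux_shift (fun s => ENNReal.ofReal (s ^ e1)) r t]
      exact lintegral_mono_set (Ioc_subset_Ioc_right (by linarith))
    -- pointwise Hölder
    have hHolder : ∀ x : EuclideanSpace ℝ (Fin d),
        (∫⁻ u in Ioc r t, ENNReal.ofReal (pSelfSim d α p (u - r) x)) ^ (1 + β)
          ≤ A0 ^ β * ∫⁻ u in Ioc r t, Gf u x ^ (1 + β) := by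
      intro x
      have hcongr : ∫⁻ u in Ioc r t, ENNReal.ofReal (pSelfSim d α p (u - r) x)
          = ∫⁻ u in Ioc r t, (W * fun u => Gf u x) u := by
        refine setLIntegral_congr_fun measurableSet_Ioc (fun u hu => ?_)
        have hur : (0:ℝ) < u - r := by simp only [Set.mem_Ioc] at hu; linarith [hu.1]
        simp only [Pi.mul_apply, hWdef, hGdef]
        rw [← mul_assoc, ← ENNReal.ofReal_mul (Real.rpow_nonneg hur.le _),
          ← Real.rpow_add hur, add_neg_cancel, Real.rpow_zero, ENNReal.ofReal_one, one_mul]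
      have hH := ENNReal.lintegral_mul_le_Lp_mul_Lq (volume.restrict (Ioc r t)) hconj
        hWm.aemeasurable (hGxm x).aemeasurable
      have h1 : (∫⁻ u in Ioc r t, ENNReal.ofReal (pSelfSim d α p (u - r) x)) ^ (1 + β)
          ≤ ((∫⁻ u in Ioc r t, W u ^ ((1 + β)/β)) ^ (1/((1 + β)/β))
              * (∫⁻ u in Ioc r t, Gf u x ^ (1 + β)) ^ (1/(1 + β))) ^ (1 + β) := by
        rw [hcongr]
        exact ENNReal.rpow_le_rpow hH hq0
      refine h1.trans ?_
      rw [ENNReal.mul_rpow_of_nonneg _ _ hq0, ← ENNReal.rpow_mul, ← ENNReal.rpow_mul]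
      have hexp1 : 1/((1 + β)/β) * (1 + β) = β := by field_simp
      have hexp2 : 1/(1 + β) * (1 + β) = 1 := by field_simp
      rw [hexp1, hexp2, ENNReal.rpow_one]
      exact mul_le_mul_left (ENNReal.rpow_le_rpow hAr hβ0.le) _
    -- convert Gf^q to product form
    have hGq : ∀ x : EuclideanSpace ℝ (Fin d), ∫⁻ u in Ioc r t, Gf u x ^ (1 + β)
        = ∫⁻ u in Ioc r t, ENNReal.ofReal ((u - r) ^ (-(a * (1 + β))))
            * ENNReal.ofReal (pSelfSim d α p (u - r) x) ^ (1 + β) := by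
      intro x
      refine setLIntegral_congr_fun measurableSet_Ioc (fun u hu => ?_)
      have hur : (0:ℝ) < u - r := by simp only [Set.mem_Ioc] at hu; linarith [hu.1]
      rw [hGdef]
      rw [ENNReal.mul_rpow_of_nonneg _ _ hq0,
        ENNReal.ofReal_rpow_of_nonneg (Real.rpow_nonneg hur.le _) hq0,
        ← Real.rpow_mul hur.le]
      ring_nf
    -- Tonelli + scaling
    have hswap : ∫⁻ x, ∫⁻ u in Ioc r t, ENNReal.ofReal ((u - r) ^ (-(a * (1 + β))))
            * ENNReal.ofReal (pSelfSim d α p (u - r) x) ^ (1 + β)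
        = ∫⁻ u in Ioc r t, ∫⁻ x, ENNReal.ofReal ((u - r) ^ (-(a * (1 + β))))
            * ENNReal.ofReal (pSelfSim d α p (u - r) x) ^ (1 + β) := by
      refine lintegral_lintegral_swap ?_
      apply Measurable.aemeasurable
      apply Measurable.mul
      · exact ((measurable_rpow_const' _).comp (measurable_snd.sub_const r)).ennreal_ofReal
      · exact (hK.comp ((measurable_snd.sub_const r).prodMk measurable_fst)).pow_const _
    have hinner : ∀ u ∈ Ioc r t,
        (∫⁻ x, ENNReal.ofReal ((u - r) ^ (-(a * (1 + β))))
            * ENNReal.ofReal (pSelfSim d α p (u - r) x) ^ (1 + β))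
          = ENNReal.ofReal ((u - r) ^ e2) * I := by
      intro u hu
      have hur : (0:ℝ) < u - r := by simp only [Set.mem_Ioc] at hu; linarith [hu.1]
      rw [lintegral_const_mul' _ _ ENNReal.ofReal_ne_top,
        aux_scale d α β hα0 hβ0 p hpm hp0 hur, ← hIdef, ← mul_assoc,
        ← ENNReal.ofReal_mul (Real.rpow_nonneg hur.le _), ← Real.rpow_add hur, ← hγdef,
        ← he2def]
    calc ∫⁻ x, (∫⁻ u in Ioc r t, ENNReal.ofReal (pSelfSim d α p (u - r) x)) ^ (1 + β)
        ≤ ∫⁻ x, A0 ^ β * ∫⁻ u in Ioc r t, Gf u x ^ (1 + β) := lintegral_mono hHolder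
      _ = A0 ^ β * ∫⁻ x, ∫⁻ u in Ioc r t, Gf u x ^ (1 + β) :=
          lintegral_const_mul' _ _ (ENNReal.rpow_lt_top_of_nonneg hβ0.le hA0.ne).ne
      _ = A0 ^ β * ∫⁻ u in Ioc r t, ∫⁻ x, ENNReal.ofReal ((u - r) ^ (-(a * (1 + β))))
            * ENNReal.ofReal (pSelfSim d α p (u - r) x) ^ (1 + β) := by
          rw [← hswap]; congr 1; exact lintegral_congr hGq
      _ = A0 ^ β * ∫⁻ u in Ioc r t, ENNReal.ofReal ((u - r) ^ e2) * I := by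
          congr 1
          exact setLIntegral_congr_fun measurableSet_Ioc hinner
      _ = A0 ^ β * ((∫⁻ u in Ioc r t, ENNReal.ofReal ((u - r) ^ e2)) * I) := by
          rw [lintegral_mul_const' _ _ hpint.ne]
      _ ≤ A0 ^ β * (B0 * I) := by
          refine mul_le_mul_right (mul_le_mul_left ?_ I) _
          rw [aux_shift (fun s => ENNReal.ofReal (s ^ e2)) r t]
          exact lintegral_mono_set (Ioc_subset_Ioc_right (by linarith))
      _ = K := rfl
  calc ∫⁻ r in Ioc (0:ℝ) t,
        ∫⁻ x, (∫⁻ u in Ioc r t, ENNReal.ofReal (pSelfSim d α p (u - r) x)) ^ (1 + β)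
      ≤ ∫⁻ _ in Ioc (0:ℝ) t, K :=
        setLIntegral_mono measurable_const fun r hr => hbound r hr.1
    _ = K * volume (Ioc (0:ℝ) t) := setLIntegral_const _ _
    _ < ⊤ := ENNReal.mul_lt_top hKlt (by rw [Real.volume_Ioc]; exact ENNReal.ofReal_lt_top)
end

section
/- Let d ≥ 1 be an integer, 0 < α ≤ 2, 0 < β < 1, and let p : ℝ^d → [0,∞) be measurable. For t > 0 set p_t(x) := t^{-d/α} p(t^{-1/α} x). Then for every Δ > 0 the exact scaling identity holds (as an equality in [0,∞]): ∫_0^∞ ∫_{ℝ^d} (∫_0^Δ p_{l+s}(x) ds)^{1+β} dx dl = Δ^{2+β-(d/α)β} · ∫_0^∞ ∫_{ℝ^d} (∫_0^1 p_{l+s}(x) ds)^{1+β} dx dl. -/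
open MeasureTheory Set Filter
open scoped ENNReal

lemma lint_scale_real (c : ℝ) (hc : 0 < c) (s : Set ℝ) (hs : MeasurableSet s)
    (f : ℝ → ℝ≥0∞) :
    ∫⁻ x in s, f x = ENNReal.ofReal c * ∫⁻ x in (fun x => c * x) ⁻¹' s, f (c * x) := by
  set e : ℝ ≃ᵐ ℝ := (Homeomorph.mulLeft₀ c hc.ne').toMeasurableEquiv with he
  have hmap : Measure.map e (volume : Measure ℝ) = ENNReal.ofReal c⁻¹ • volume := by
    rw [he]; simpa [abs_of_pos (inv_pos.2 hc)] using Real.map_volume_mul_left hc.ne'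
  have h1 : ∫⁻ y in s, f y ∂(ENNReal.ofReal c⁻¹ • volume)
      = ∫⁻ x in (fun x => c * x) ⁻¹' s, f (c * x) := by
    rw [← hmap, Measure.restrict_map e.measurable hs,
      MeasureTheory.lintegral_map_equiv]
    rfl
  rw [← h1, Measure.restrict_smul, lintegral_smul_measure, smul_eq_mul, ← mul_assoc,
    ← ENNReal.ofReal_mul hc.le, mul_inv_cancel₀ hc.ne', ENNReal.ofReal_one, one_mul]

lemma lint_scale_euc (d : ℕ) (c : ℝ) (hc : 0 < c)
    (g : EuclideanSpace ℝ (Fin d) → ℝ≥0∞) :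
    ∫⁻ x, g x = ENNReal.ofReal (c ^ d) * ∫⁻ y, g (c • y) := by
  set e : EuclideanSpace ℝ (Fin d) ≃ᵐ EuclideanSpace ℝ (Fin d) :=
    (Homeomorph.smulOfNeZero c hc.ne').toMeasurableEquiv with he
  have hmap : Measure.map e (volume : Measure (EuclideanSpace ℝ (Fin d)))
      = ENNReal.ofReal ((c ^ d)⁻¹) • volume := by
    rw [he]
    have := Measure.map_addHaar_smul (volume : Measure (EuclideanSpace ℝ (Fin d))) hc.ne'
    simpa [finrank_euclideanSpace_fin, abs_of_pos (inv_pos.2 (pow_pos hc d))] using this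
  have h1 : ∫⁻ x, g x ∂(ENNReal.ofReal ((c ^ d)⁻¹) • volume) = ∫⁻ y, g (c • y) := by
    rw [← hmap, MeasureTheory.lintegral_map_equiv]; rfl
  rw [← h1, lintegral_smul_measure, smul_eq_mul, ← mul_assoc, ← ENNReal.ofReal_mul (pow_pos hc d).le,
    mul_inv_cancel₀ (pow_pos hc d).ne', ENNReal.ofReal_one, one_mul]

lemma pscale (d : ℕ) (α : ℝ) (p : EuclideanSpace ℝ (Fin d) → ℝ)
    (c t : ℝ) (hc : 0 < c) (ht : 0 < t) (x : EuclideanSpace ℝ (Fin d)) :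
    pSelfSim d α p (c * t) ((c ^ (1/α) : ℝ) • x)
      = c ^ (-((d : ℝ) / α)) * pSelfSim d α p t x := by
  unfold pSelfSim
  have h1 : c ^ (-(1/α)) * c ^ (1/α) = 1 := by
    rw [← Real.rpow_add hc, neg_add_cancel, Real.rpow_zero]
  have hs : ((c * t) ^ (-(1 / α)) : ℝ) • ((c ^ (1/α) : ℝ) • x)
      = (t ^ (-(1 / α)) : ℝ) • x := by
    rw [smul_smul, Real.mul_rpow hc.le ht.le, mul_comm (c ^ (-(1/α))) (t ^ (-(1/α))),
      mul_assoc, h1, mul_one]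
  rw [hs, Real.mul_rpow hc.le ht.le, mul_assoc]

theorem stmt_13 (d : ℕ) (hd : 1 ≤ d) (α β : ℝ) (hα0 : 0 < α) (hα2 : α ≤ 2)
    (hβ0 : 0 < β) (hβ1 : β < 1)
    (p : EuclideanSpace ℝ (Fin d) → ℝ) (hpm : Measurable p) (hp0 : ∀ x, 0 ≤ p x)
    (Δ : ℝ) (hΔ : 0 < Δ) :
    ∫⁻ l in Ioi (0 : ℝ),
        ∫⁻ x, (∫⁻ s in Ioc (0 : ℝ) Δ, ENNReal.ofReal (pSelfSim d α p (l + s) x)) ^ (1 + β)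
      = ENNReal.ofReal (Δ ^ (2 + β - ((d : ℝ) / α) * β)) *
        ∫⁻ l in Ioi (0 : ℝ),
          ∫⁻ x, (∫⁻ s in Ioc (0 : ℝ) 1, ENNReal.ofReal (pSelfSim d α p (l + s) x)) ^ (1 + β) := by
  have hβ : (0:ℝ) ≤ 1 + β := by linarith
  set q : ℝ → EuclideanSpace ℝ (Fin d) → ℝ≥0∞ :=
    fun t x => ENNReal.ofReal (pSelfSim d α p t x) with hq
  -- preimage computations
  have hpre1 : (fun x => Δ * x) ⁻¹' Ioi (0:ℝ) = Ioi 0 := by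
    ext x
    simp only [mem_preimage, mem_Ioi]
    exact ⟨fun h => by nlinarith, fun h => mul_pos hΔ h⟩
  have hpre2 : (fun x => Δ * x) ⁻¹' Ioc (0:ℝ) Δ = Ioc 0 1 := by
    ext x
    simp only [mem_preimage, mem_Ioc]
    constructor
    · rintro ⟨h1, h2⟩
      exact ⟨by nlinarith, by nlinarith⟩
    · rintro ⟨h1, h2⟩
      exact ⟨mul_pos hΔ h1, by nlinarith⟩
  -- exponent constants
  set e2 : ℝ := (1 - (d:ℝ)/α) * (1 + β) with he2
  have hKpos : (0:ℝ) < Δ ^ ((d:ℝ)/α) * Δ ^ e2 :=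
    mul_pos (Real.rpow_pos_of_pos hΔ _) (Real.rpow_pos_of_pos hΔ _)
  -- the key pointwise (in l) identity
  have key : ∀ l ∈ Ioi (0:ℝ),
      (∫⁻ x, (∫⁻ s in Ioc (0:ℝ) Δ, q (Δ * l + s) x) ^ (1 + β))
        = ENNReal.ofReal (Δ ^ ((d:ℝ)/α) * Δ ^ e2) *
            ∫⁻ x, (∫⁻ s in Ioc (0:ℝ) 1, q (l + s) x) ^ (1 + β) := by
    intro l hl
    rw [mem_Ioi] at hl
    set c : ℝ := Δ ^ ((1:ℝ)/α) with hcdef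
    have hc : 0 < c := Real.rpow_pos_of_pos hΔ _
    have hcd : c ^ d = Δ ^ ((d:ℝ)/α) := by
      rw [hcdef, ← Real.rpow_natCast (Δ ^ ((1:ℝ)/α)) d, ← Real.rpow_mul hΔ.le]
      congr 1 <;> ring
    rw [lint_scale_euc d c hc]
    -- now transform the inner s-integral for each y
    have inner : ∀ y : EuclideanSpace ℝ (Fin d),
        (∫⁻ s in Ioc (0:ℝ) Δ, q (Δ * l + s) (c • y))
          = ENNReal.ofReal (Δ ^ (1 - (d:ℝ)/α)) * ∫⁻ σ in Ioc (0:ℝ) 1, q (l + σ) y := by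
      intro y
      rw [lint_scale_real Δ hΔ (Ioc 0 Δ) measurableSet_Ioc, hpre2]
      have hcongr : ∫⁻ σ in Ioc (0:ℝ) 1, q (Δ * l + Δ * σ) (c • y)
          = ∫⁻ σ in Ioc (0:ℝ) 1, ENNReal.ofReal (Δ ^ (-((d:ℝ)/α))) * q (l + σ) y := by
        refine setLIntegral_congr_fun measurableSet_Ioc ?_
        intro σ hσ
        have hlσ : 0 < l + σ := by have := hσ.1; linarith
        rw [hq]
        simp only
        rw [← mul_add, hcdef, pscale d α p Δ (l + σ) hΔ hlσ y,
          ENNReal.ofReal_mul (Real.rpow_nonneg hΔ.le _)]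
      rw [hcongr, lintegral_const_mul' _ _ ENNReal.ofReal_ne_top, ← mul_assoc,
        ← ENNReal.ofReal_mul hΔ.le]
      congr 2
      have := Real.rpow_add hΔ 1 (-((d:ℝ)/α))
      rw [Real.rpow_one] at this
      rw [← this]
      congr 1 <;> ring
    have hy : ∀ y : EuclideanSpace ℝ (Fin d),
        (∫⁻ s in Ioc (0:ℝ) Δ, q (Δ * l + s) (c • y)) ^ (1 + β)
          = ENNReal.ofReal (Δ ^ e2) * (∫⁻ σ in Ioc (0:ℝ) 1, q (l + σ) y) ^ (1 + β) := by
      intro y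
      rw [inner y, ENNReal.mul_rpow_of_nonneg _ _ hβ,
        ENNReal.ofReal_rpow_of_pos (Real.rpow_pos_of_pos hΔ _),
        ← Real.rpow_mul hΔ.le, he2]
    calc ENNReal.ofReal (c ^ d) *
          ∫⁻ y, (∫⁻ s in Ioc (0:ℝ) Δ, q (Δ * l + s) (c • y)) ^ (1 + β)
        = ENNReal.ofReal (c ^ d) *
          ∫⁻ y, ENNReal.ofReal (Δ ^ e2) * (∫⁻ σ in Ioc (0:ℝ) 1, q (l + σ) y) ^ (1 + β) := by
          congr 1; exact lintegral_congr hy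
      _ = ENNReal.ofReal (Δ ^ ((d:ℝ)/α) * Δ ^ e2) *
          ∫⁻ y, (∫⁻ σ in Ioc (0:ℝ) 1, q (l + σ) y) ^ (1 + β) := by
          rw [lintegral_const_mul' _ _ ENNReal.ofReal_ne_top, ← mul_assoc, hcd,
            ← ENNReal.ofReal_mul (Real.rpow_nonneg hΔ.le _)]
  -- outer substitution
  rw [lint_scale_real Δ hΔ (Ioi 0) measurableSet_Ioi
    (fun l => ∫⁻ x, (∫⁻ s in Ioc (0:ℝ) Δ, q (l + s) x) ^ (1 + β)), hpre1]
  rw [setLIntegral_congr_fun measurableSet_Ioi key,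
    lintegral_const_mul' _ _ ENNReal.ofReal_ne_top, ← mul_assoc,
    ← ENNReal.ofReal_mul hΔ.le]
  congr 2
  rw [← Real.rpow_add hΔ]
  have := Real.rpow_add hΔ 1 ((d:ℝ)/α + e2)
  rw [Real.rpow_one] at this
  rw [← this]
  congr 1
  rw [he2]; ring
end
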